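/- Let a > 0, b ≥ 0, c > 0, u₀ ∈ ℝ, and let u be an axisymmetric stationary rotating profile on [0, c] with u(0) = u₀, i.e. u is differentiable on [0, c] and u'(r)/√(1 + u'(r)²) = r(a r² + 2b)/4 for all r ∈ [0, c]. Then u'(c) > 0, and setting R = c √(1 + u'(c)²)/u'(c) and y(r) = R + u₀ − √(R² − r²), one has u(r) < y(r) for all r with 0 < r ≤ c. -/

import Mathlib

open Set

lemma phi_strictMono : StrictMono (fun s : ℝ => s / Real.sqrt (1 + s ^ 2)) := by
  intro p q h
  have hA : (0:ℝ) < Real.sqrt (1 + p ^ 2) := Real.sqrt_pos.2 (by positivity)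
  have hB : (0:ℝ) < Real.sqrt (1 + q ^ 2) := Real.sqrt_pos.2 (by positivity)
  have hA2 : Real.sqrt (1 + p ^ 2) ^ 2 = 1 + p ^ 2 := Real.sq_sqrt (by positivity)
  have hB2 : Real.sqrt (1 + q ^ 2) ^ 2 = 1 + q ^ 2 := Real.sq_sqrt (by positivity)
  simp only
  rw [div_lt_div_iff₀ hA hB]
  rcases le_or_gt 0 p with hp | hp
  · have hq : 0 < q := lt_of_le_of_lt hp h
    have h2 : (p * Real.sqrt (1 + q ^ 2)) ^ 2 < (q * Real.sqrt (1 + p ^ 2)) ^ 2 := by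
      nlinarith
    exact lt_of_pow_lt_pow_left₀ 2 (by positivity) h2
  · rcases lt_or_ge q 0 with hq | hq
    · have h2 : (-(q * Real.sqrt (1 + p ^ 2))) ^ 2 < (-(p * Real.sqrt (1 + q ^ 2))) ^ 2 := by
        nlinarith
      have h3 : -(q * Real.sqrt (1 + p ^ 2)) < -(p * Real.sqrt (1 + q ^ 2)) :=
        lt_of_pow_lt_pow_left₀ 2 (by nlinarith) h2
      linarith
    · have h1 : p * Real.sqrt (1 + q ^ 2) < 0 := mul_neg_of_neg_of_pos hp hB
      have h2 : 0 ≤ q * Real.sqrt (1 + p ^ 2) := mul_nonneg hq hA.le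
      linarith

set_option maxHeartbeats 1000000 in
/-- Theorem (comparison with an upper circle): if `u` is an axisymmetric stationary
rotating profile on `[0,c]` with `u(0) = u₀`, `a > 0`, `b ≥ 0`, then `u'(c) > 0` and,
with `R = c√(1+u'(c)²)/u'(c)` and `y(r) = R + u₀ - √(R² - r²)`, one has `u(r) < y(r)`
for `0 < r ≤ c`. -/
theorem stmt_1 (a b c u₀ : ℝ) (ha : 0 < a) (hb : 0 ≤ b) (hc : 0 < c)
    (u u' : ℝ → ℝ)
    (hu : ∀ r ∈ Icc (0:ℝ) c, HasDerivAt u (u' r) r)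
    (heq : ∀ r ∈ Icc (0:ℝ) c, u' r / Real.sqrt (1 + u' r ^ 2) = r * (a * r ^ 2 + 2 * b) / 4)
    (h0 : u 0 = u₀) :
    0 < u' c ∧
      ∀ r, 0 < r → r ≤ c →
        u r < c * Real.sqrt (1 + u' c ^ 2) / u' c + u₀ -
          Real.sqrt ((c * Real.sqrt (1 + u' c ^ 2) / u' c) ^ 2 - r ^ 2) := by
  have hcc : c ∈ Icc (0:ℝ) c := ⟨hc.le, le_refl c⟩
  have hTc := heq c hcc
  have hT : 0 < c * (a * c ^ 2 + 2 * b) / 4 := by positivity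
  have hs : (0:ℝ) < Real.sqrt (1 + u' c ^ 2) := Real.sqrt_pos.2 (by positivity)
  have hs2 : Real.sqrt (1 + u' c ^ 2) ^ 2 = 1 + u' c ^ 2 := Real.sq_sqrt (by positivity)
  have hp : 0 < u' c := by
    have h1 : 0 < u' c / Real.sqrt (1 + u' c ^ 2) := hTc ▸ hT
    rcases div_pos_iff.mp h1 with ⟨h, _⟩ | ⟨_, h⟩
    · exact h
    · linarith
  set R : ℝ := c * Real.sqrt (1 + u' c ^ 2) / u' c with hRdef
  have hRpos : 0 < R := div_pos (mul_pos hc hs) hp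
  have hTc' : u' c * 4 = c * (a * c ^ 2 + 2 * b) * Real.sqrt (1 + u' c ^ 2) := by
    field_simp at hTc
    linarith [hTc]
  have hRval : (a * c ^ 2 + 2 * b) * R = 4 := by
    rw [hRdef]
    field_simp
    linear_combination -hTc'
  have hcR : c < R := by
    have hps : u' c < Real.sqrt (1 + u' c ^ 2) := by
      have h1 : Real.sqrt (u' c ^ 2) < Real.sqrt (1 + u' c ^ 2) :=
        Real.sqrt_lt_sqrt (by positivity) (by linarith)
      rwa [Real.sqrt_sq hp.le] at h1
    rw [hRdef, lt_div_iff₀ hp]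
    nlinarith
  clear hRdef
  clear_value R
  have hpos : ∀ r ∈ Icc (0:ℝ) c, 0 < R ^ 2 - r ^ 2 := by
    intro r hr
    nlinarith [hr.1, hr.2]
  -- derivative of the circle
  have hy : ∀ r ∈ Icc (0:ℝ) c,
      HasDerivAt (fun x => R + u₀ - Real.sqrt (R ^ 2 - x ^ 2))
        (r / Real.sqrt (R ^ 2 - r ^ 2)) r := by
    intro r hr
    have h1 : HasDerivAt (fun x : ℝ => R ^ 2 - x ^ 2) (-(2 * r)) r := by
      simpa using (hasDerivAt_pow 2 r).const_sub (R ^ 2)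
    have h2 := h1.sqrt (ne_of_gt (hpos r hr))
    have h3 := h2.const_sub (R + u₀)
    convert h3 using 1 <;> try rfl
    have hsq : (0:ℝ) < Real.sqrt (R ^ 2 - r ^ 2) := Real.sqrt_pos.2 (hpos r hr)
    field_simp
  -- pointwise derivative comparison
  have hlt : ∀ r, 0 < r → r < c → u' r < r / Real.sqrt (R ^ 2 - r ^ 2) := by
    intro r hr hrc
    have hrI : r ∈ Icc (0:ℝ) c := ⟨hr.le, hrc.le⟩
    have hD : (0:ℝ) < Real.sqrt (R ^ 2 - r ^ 2) := Real.sqrt_pos.2 (hpos r hrI)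
    have hD2 : Real.sqrt (R ^ 2 - r ^ 2) ^ 2 = R ^ 2 - r ^ 2 :=
      Real.sq_sqrt (hpos r hrI).le
    set q : ℝ := r / Real.sqrt (R ^ 2 - r ^ 2) with hq
    have h1q : 1 + q ^ 2 = (R / Real.sqrt (R ^ 2 - r ^ 2)) ^ 2 := by
      rw [hq, div_pow, div_pow, hD2]
      field_simp [(hpos r hrI).ne']
      ring
    have hsq : Real.sqrt (1 + q ^ 2) = R / Real.sqrt (R ^ 2 - r ^ 2) := by
      rw [h1q, Real.sqrt_sq (by positivity)]
    have hphiq : q / Real.sqrt (1 + q ^ 2) = r / R := by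
      rw [hsq, hq, div_div_div_cancel_right₀]
      exact hD.ne'
    have hphiu := heq r hrI
    have hrR : r * (a * r ^ 2 + 2 * b) / 4 < r / R := by
      have h2 : r / R = r * (a * c ^ 2 + 2 * b) / 4 := by
        rw [div_eq_div_iff (ne_of_gt hRpos) (by norm_num : (4:ℝ) ≠ 0)]
        linear_combination -r * hRval
      rw [h2]
      have h3 : a * r ^ 2 < a * c ^ 2 := by nlinarith [mul_pos (sub_pos.2 hrc) (by linarith : (0:ℝ) < c + r)]
      nlinarith
    have hφ : u' r / Real.sqrt (1 + u' r ^ 2) < q / Real.sqrt (1 + q ^ 2) := by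
      rw [hphiu, hphiq]; exact hrR
    exact phi_strictMono.lt_iff_lt.mp hφ
  -- monotone comparison function
  set g : ℝ → ℝ := fun x => (R + u₀ - Real.sqrt (R ^ 2 - x ^ 2)) - u x with hgdef
  have hg : ∀ r ∈ Icc (0:ℝ) c,
      HasDerivAt g (r / Real.sqrt (R ^ 2 - r ^ 2) - u' r) r :=
    fun r hr => (hy r hr).sub (hu r hr)
  have hmono : StrictMonoOn g (Icc (0:ℝ) c) := by
    apply strictMonoOn_of_deriv_pos (convex_Icc 0 c)
    · exact fun x hx => (hg x hx).continuousAt.continuousWithinAt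
    · intro x hx
      rw [interior_Icc] at hx
      rw [(hg x ⟨hx.1.le, hx.2.le⟩).deriv]
      exact sub_pos.2 (hlt x hx.1 hx.2)
  refine ⟨hp, fun r hr hrc => ?_⟩
  have hlt0 : g 0 < g r := hmono ⟨le_refl 0, hc.le⟩ ⟨hr.le, hrc⟩ hr
  have hg0 : g 0 = 0 := by
    have h1 : Real.sqrt (R ^ 2 - 0 ^ 2) = R := by
      norm_num [Real.sqrt_sq hRpos.le]
    simp only [hgdef, h1, h0]
    ring
  rw [hg0] at hlt0
  have : 0 < (R + u₀ - Real.sqrt (R ^ 2 - r ^ 2)) - u r := hlt0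
  linarith
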